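/- Let X be a compact metric space, Z ⊂ X an Fσ-set written Z = ⋃ᵢ Zᵢ with each Zᵢ closed in X, and M a metric space. For ε > 0 and i ≥ 1, the set H(Zᵢ,ε) = { g ∈ C(X,M) : no connected component of a fiber of g of diameter ≥ ε meets Zᵢ } is open in C(X,M) with the uniform convergence topology. -/

import Mathlib

open Metric TopologicalSpace Set Filter Topology

/-- The connected component of a point in a closed set is closed. -/
lemma isClosed_connectedComponentIn_aux {X : Type*} [TopologicalSpace X] {F : Set X}
    (hF : IsClosed F) (x : X) : IsClosed (connectedComponentIn F x) := by
  by_cases hx : x ∈ F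
  · apply isClosed_of_closure_subset
    have h1 : IsPreconnected (closure (connectedComponentIn F x)) :=
      isPreconnected_connectedComponentIn.closure
    have h2 : closure (connectedComponentIn F x) ⊆ F := by
      calc closure (connectedComponentIn F x) ⊆ closure F :=
            closure_mono (connectedComponentIn_subset F x)
        _ = F := hF.closure_eq
    exact h1.subset_connectedComponentIn
      (subset_closure (mem_connectedComponentIn hx)) h2
  · rw [connectedComponentIn_eq_empty hx]
    exact isClosed_empty

/-- For a compact metric space `X`, a metric space `M`, a closed set `Zᵢ ⊆ X` and
`ε > 0`, the set `H(Zᵢ,ε)` of maps `g : X → M` such that no connected component of a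
fiber of `g` of diameter `≥ ε` meets `Zᵢ` is open in `C(X,M)` with the uniform
convergence topology.  (A component of a fiber meets `Zᵢ` iff it is the component in
the fiber of some point `x ∈ Zᵢ`.) -/
theorem stmt5 {X M : Type*} [MetricSpace X] [CompactSpace X] [MetricSpace M]
    (Zi : Set X) (hZi : IsClosed Zi) (ε : ℝ) (hε : 0 < ε) :
    IsOpen {g : C(X, M) |
      ∀ x ∈ Zi, Metric.diam (connectedComponentIn (⇑g ⁻¹' {g x}) x) < ε} := by
  rw [Metric.isOpen_iff]
  intro g hg
  by_contra hcon
  push_neg at hcon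
  -- extract a sequence of bad maps converging to g
  have key : ∀ n : ℕ, ∃ (f : C(X, M)) (x : X), dist f g < 1 / (n + 1) ∧ x ∈ Zi ∧
      ε ≤ Metric.diam (connectedComponentIn (⇑f ⁻¹' {f x}) x) := by
    intro n
    have hns := hcon (1 / (n + 1)) (by positivity)
    rw [Set.not_subset] at hns
    obtain ⟨f, hfball, hfns⟩ := hns
    simp only [Set.mem_setOf_eq, not_forall, not_lt, exists_prop] at hfns
    obtain ⟨x, hx, hd⟩ := hfns
    exact ⟨f, x, mem_ball.1 hfball, hx, hd⟩
  choose f x hfdist hxZ hdiam using key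
  -- the bad components
  set C : ℕ → Set X := fun n => connectedComponentIn (⇑(f n) ⁻¹' {f n (x n)}) (x n) with hC
  have hxC : ∀ n, x n ∈ C n := fun n =>
    mem_connectedComponentIn (by simp)
  have hCclosed : ∀ n, IsClosed (C n) :=
    fun n => isClosed_connectedComponentIn_aux
      (isClosed_singleton.preimage (f n).continuous) (x n)
  have hCcompact : ∀ n, IsCompact (C n) := fun n => (hCclosed n).isCompact
  set K : ℕ → NonemptyCompacts X := fun n => ⟨⟨C n, hCcompact n⟩, ⟨x n, hxC n⟩⟩ with hK
  -- extract a convergent subsequence of (x n, K n)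
  obtain ⟨⟨x₀, K₀⟩, φ, hφ, hconv⟩ :=
    CompactSpace.tendsto_subseq (fun n => ((x n, K n) : X × NonemptyCompacts X))
  have hxconv : Tendsto (fun n => x (φ n)) atTop (𝓝 x₀) :=
    (continuous_fst.tendsto _).comp hconv
  have hKconv : Tendsto (fun n => K (φ n)) atTop (𝓝 K₀) :=
    (continuous_snd.tendsto _).comp hconv
  -- Hausdorff distances tend to zero
  set D : ℕ → ℝ := fun n => hausdorffDist (C (φ n)) (K₀ : Set X) with hD
  have hDconv : Tendsto D atTop (𝓝 0) := by
    have := (tendsto_iff_dist_tendsto_zero.1 hKconv)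
    simp only [NonemptyCompacts.dist_eq] at this
    exact this
  have hDnonneg : ∀ n, 0 ≤ D n := fun n => hausdorffDist_nonneg
  have hEne : ∀ n, EMetric.hausdorffEdist (C (φ n)) (K₀ : Set X) ≠ ⊤ := fun n =>
    hausdorffEdist_ne_top_of_nonempty_of_bounded ⟨x (φ n), hxC (φ n)⟩ K₀.nonempty
      (hCcompact (φ n)).isBounded K₀.isCompact.isBounded
  -- the perturbations tend to zero
  have hfconv : Tendsto (fun n => dist (f (φ n)) g) atTop (𝓝 0) := by
    apply squeeze_zero (fun n => dist_nonneg) (fun n => ?_)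
      tendsto_one_div_add_atTop_nhds_zero_nat
    refine le_trans (hfdist (φ n)).le ?_
    have h1 : (n : ℝ) ≤ (φ n : ℝ) := Nat.cast_le.2 hφ.le_apply
    exact one_div_le_one_div_of_le (by positivity) (by linarith)
  -- x₀ ∈ Zi
  have hx₀Z : x₀ ∈ Zi := hZi.mem_of_tendsto hxconv (Eventually.of_forall fun n => hxZ (φ n))
  -- x₀ ∈ K₀
  have hx₀K : x₀ ∈ (K₀ : Set X) := by
    rw [K₀.isCompact.isClosed.mem_iff_infDist_zero K₀.nonempty]
    refine le_antisymm ?_ infDist_nonneg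
    have hle : ∀ n, infDist x₀ (K₀ : Set X) ≤ dist x₀ (x (φ n)) + D n := by
      intro n
      have h1 : infDist x₀ (K₀ : Set X) ≤ infDist (x (φ n)) (K₀ : Set X) + dist x₀ (x (φ n)) :=
        infDist_le_infDist_add_dist
      have h2 : infDist (x (φ n)) (K₀ : Set X) ≤ D n :=
        infDist_le_hausdorffDist_of_mem (hxC (φ n)) (hEne n)
      linarith
    have hlim : Tendsto (fun n => dist x₀ (x (φ n)) + D n) atTop (𝓝 0) := by
      have h1 : Tendsto (fun n => dist x₀ (x (φ n))) atTop (𝓝 0) := by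
        simpa [dist_comm] using tendsto_iff_dist_tendsto_zero.1 hxconv
      simpa using h1.add hDconv
    exact le_of_tendsto_of_tendsto' tendsto_const_nhds hlim hle
  -- approximating points in C (φ n) for a point of K₀
  have happrox : ∀ y ∈ (K₀ : Set X), ∀ n : ℕ, ∃ z ∈ C (φ n), dist y z < D n + 1 / (n + 1) := by
    intro y hy n
    have hlt : hausdorffDist (C (φ n)) (K₀ : Set X) < D n + 1 / (n + 1) := by
      have h0 : (0 : ℝ) < 1 / (n + 1) := by positivity
      have h1 : D n < D n + 1 / (n + 1) := by linarith
      exact h1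
    obtain ⟨z, hz, hzd⟩ := exists_dist_lt_of_hausdorffDist_lt' hy hlt (hEne n)
    exact ⟨z, hz, by simpa [dist_comm] using hzd⟩
  -- K₀ lies in the fiber of g over x₀
  have hKfiber : (K₀ : Set X) ⊆ ⇑g ⁻¹' {g x₀} := by
    intro y hy
    choose z hzC hzd using happrox y hy
    have hzconv : Tendsto z atTop (𝓝 y) := by
      apply tendsto_iff_dist_tendsto_zero.2
      apply squeeze_zero (fun n => dist_nonneg) (fun n => (dist_comm (z n) y ▸ (hzd n).le))
      simpa using hDconv.add tendsto_one_div_add_atTop_nhds_zero_nat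
    have hbound : ∀ n, dist (g y) (g x₀) ≤
        dist (g y) (g (z n)) + 2 * dist (f (φ n)) g + dist (g (x (φ n))) (g x₀) := by
      intro n
      have hz : f (φ n) (z n) = f (φ n) (x (φ n)) := by
        have := connectedComponentIn_subset (⇑(f (φ n)) ⁻¹' {f (φ n) (x (φ n))}) (x (φ n)) (hzC n)
        simpa using this
      calc dist (g y) (g x₀)
          ≤ dist (g y) (g (z n)) + dist (g (z n)) (g (x (φ n))) + dist (g (x (φ n))) (g x₀) :=
            dist_triangle4 _ _ _ _
        _ ≤ dist (g y) (g (z n)) + 2 * dist (f (φ n)) g + dist (g (x (φ n))) (g x₀) := by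
            have h1 : dist (g (z n)) (g (x (φ n))) ≤
                dist (g (z n)) (f (φ n) (z n)) + dist (f (φ n) (x (φ n))) (g (x (φ n))) := by
              calc dist (g (z n)) (g (x (φ n)))
                  ≤ dist (g (z n)) (f (φ n) (z n)) + dist (f (φ n) (z n)) (g (x (φ n))) :=
                    dist_triangle _ _ _
                _ = dist (g (z n)) (f (φ n) (z n)) + dist (f (φ n) (x (φ n))) (g (x (φ n))) := by
                    rw [hz]
            have h2 : dist (g (z n)) (f (φ n) (z n)) ≤ dist (f (φ n)) g := by
              rw [dist_comm]; exact ContinuousMap.dist_apply_le_dist _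
            have h3 : dist (f (φ n) (x (φ n))) (g (x (φ n))) ≤ dist (f (φ n)) g :=
              ContinuousMap.dist_apply_le_dist _
            linarith
    have hlim : Tendsto (fun n => dist (g y) (g (z n)) + 2 * dist (f (φ n)) g +
        dist (g (x (φ n))) (g x₀)) atTop (𝓝 0) := by
      have h1 : Tendsto (fun n => dist (g y) (g (z n))) atTop (𝓝 0) := by
        simpa [dist_comm] using
          tendsto_iff_dist_tendsto_zero.1 ((g.continuous.tendsto y).comp hzconv)
      have h2 : Tendsto (fun n => dist (g (x (φ n))) (g x₀)) atTop (𝓝 0) :=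
        tendsto_iff_dist_tendsto_zero.1 ((g.continuous.tendsto x₀).comp hxconv)
      simpa using (h1.add (hfconv.const_mul 2)).add h2
    have : dist (g y) (g x₀) ≤ 0 :=
      le_of_tendsto_of_tendsto' tendsto_const_nhds hlim hbound
    simpa using le_antisymm this dist_nonneg
  -- K₀ is preconnected
  have hKconn : IsPreconnected (K₀ : Set X) := by
    rintro U V hU hV hUV ⟨u, huK, huU⟩ ⟨v, hvK, hvV⟩
    by_contra hempty
    rw [Set.not_nonempty_iff_eq_empty] at hempty
    -- the two compact pieces
    set A : Set X := (K₀ : Set X) \ V with hA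
    set B : Set X := (K₀ : Set X) \ U with hB
    have hAcomp : IsCompact A := K₀.isCompact.diff hV
    have hBcomp : IsCompact B := K₀.isCompact.diff hU
    have hABdisj : Disjoint A B := by
      rw [Set.disjoint_iff_inter_eq_empty]
      ext w; simp only [hA, hB, mem_inter_iff, mem_diff, mem_empty_iff_false, iff_false]
      rintro ⟨⟨hwK, hwV⟩, ⟨-, hwU⟩⟩
      rcases hUV hwK with h | h
      · exact hwU h
      · exact hwV h
    have hcover : (K₀ : Set X) ⊆ A ∪ B := by
      intro w hw
      by_cases hwV : w ∈ V
      · refine Or.inr ⟨hw, fun hwU => ?_⟩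
        have : w ∈ (K₀ : Set X) ∩ (U ∩ V) := ⟨hw, hwU, hwV⟩
        rw [hempty] at this; exact this
      · exact Or.inl ⟨hw, hwV⟩
    have huA : u ∈ A := ⟨huK, fun huV => by
      have : u ∈ (K₀ : Set X) ∩ (U ∩ V) := ⟨huK, huU, huV⟩
      rw [hempty] at this; exact this⟩
    have hvB : v ∈ B := ⟨hvK, fun hvU => by
      have : v ∈ (K₀ : Set X) ∩ (U ∩ V) := ⟨hvK, hvU, hvV⟩
      rw [hempty] at this; exact this⟩
    obtain ⟨δ, hδpos, hthdisj⟩ := hABdisj.exists_thickenings hAcomp hBcomp.isClosed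
    obtain ⟨n, hn⟩ := (hDconv.eventually (gt_mem_nhds hδpos)).exists
    -- C (φ n) is covered by the two thickenings
    have hCcover : C (φ n) ⊆ thickening δ A ∪ thickening δ B := by
      intro w hw
      obtain ⟨w', hw'K, hww'⟩ := exists_dist_lt_of_hausdorffDist_lt hw hn (hEne n)
      rcases hcover hw'K with h | h
      · exact Or.inl (mem_thickening_iff.2 ⟨w', h, hww'⟩)
      · exact Or.inr (mem_thickening_iff.2 ⟨w', h, hww'⟩)
    -- C (φ n) meets both thickenings
    obtain ⟨a, haC, hau⟩ := exists_dist_lt_of_hausdorffDist_lt' huK hn (hEne n)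
    obtain ⟨b, hbC, hbv⟩ := exists_dist_lt_of_hausdorffDist_lt' hvK hn (hEne n)
    have h1 : (C (φ n) ∩ thickening δ A).Nonempty :=
      ⟨a, haC, mem_thickening_iff.2 ⟨u, huA, by simpa [dist_comm] using hau⟩⟩
    have h2 : (C (φ n) ∩ thickening δ B).Nonempty :=
      ⟨b, hbC, mem_thickening_iff.2 ⟨v, hvB, by simpa [dist_comm] using hbv⟩⟩
    obtain ⟨w, -, hw1, hw2⟩ := isPreconnected_connectedComponentIn
      (thickening δ A) (thickening δ B) isOpen_thickening isOpen_thickening hCcover h1 h2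
    exact hthdisj.ne_of_mem hw1 hw2 rfl
  -- ε ≤ diam K₀
  have hdiamK : ε ≤ Metric.diam (K₀ : Set X) := by
    have hle : ∀ n, ε ≤ Metric.diam (K₀ : Set X) + 2 * (D n + 1 / (n + 1)) := by
      intro n
      refine le_trans (hdiam (φ n)) (Metric.diam_le_of_forall_dist_le ?_ fun p hp q hq => ?_)
      · have h0 : (0 : ℝ) < 1 / (n + 1) := by positivity
        have h1 := hDnonneg n
        have h2 : 0 ≤ Metric.diam (K₀ : Set X) := Metric.diam_nonneg
        linarith
      · have hlt : hausdorffDist (C (φ n)) (K₀ : Set X) < D n + 1 / (n + 1) := by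
          have h0 : (0 : ℝ) < 1 / (n + 1) := by positivity
          have h1 : D n < D n + 1 / (n + 1) := by linarith
          exact h1
        obtain ⟨p', hp'K, hpp'⟩ := exists_dist_lt_of_hausdorffDist_lt hp hlt (hEne n)
        obtain ⟨q', hq'K, hqq'⟩ := exists_dist_lt_of_hausdorffDist_lt hq hlt (hEne n)
        have hd : dist p' q' ≤ Metric.diam (K₀ : Set X) :=
          Metric.dist_le_diam_of_mem K₀.isCompact.isBounded hp'K hq'K
        calc dist p q ≤ dist p p' + dist p' q' + dist q' q := dist_triangle4 _ _ _ _
          _ ≤ (D n + 1 / (n + 1)) + Metric.diam (K₀ : Set X) + (D n + 1 / (n + 1)) := by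
              rw [dist_comm q' q]; linarith [hpp'.le, hqq'.le, hd]
          _ = Metric.diam (K₀ : Set X) + 2 * (D n + 1 / (n + 1)) := by ring
    have hlim : Tendsto (fun n => Metric.diam (K₀ : Set X) + 2 * (D n + 1 / (n + 1)))
        atTop (𝓝 (Metric.diam (K₀ : Set X))) := by
      have : Tendsto (fun n : ℕ => D n + 1 / (n + 1)) atTop (𝓝 0) := by
        simpa using hDconv.add tendsto_one_div_add_atTop_nhds_zero_nat
      simpa using tendsto_const_nhds.add (this.const_mul 2)
    exact ge_of_tendsto' hlim hle
  -- conclude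
  have hsubset : (K₀ : Set X) ⊆ connectedComponentIn (⇑g ⁻¹' {g x₀}) x₀ :=
    hKconn.subset_connectedComponentIn hx₀K hKfiber
  have : Metric.diam (K₀ : Set X) ≤
      Metric.diam (connectedComponentIn (⇑g ⁻¹' {g x₀}) x₀) :=
    Metric.diam_mono hsubset (isCompact_univ.isBounded.subset (subset_univ _))
  linarith [hg x₀ hx₀Z]
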